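/- arXiv:2505.03373 — 2 statements merged into one kernel-verified Lean document; each statement's English description precedes it below -/
import Mathlib

section
/- Consider the relaxed structured pruning problem: minimize (1/2)‖WX − Y‖_F² over W ∈ ℝ^{m×n}, s ∈ [0,1]^n subject to W·diag(s) = 0 and 1ᵀs = λ, where λ ∈ ℕ with 1 ≤ λ ≤ n. If (Ŵ, ŝ) is an optimal solution and J is any λ-element subset of the support of ŝ, then (Ŵ, s') is also optimal, where s' is the indicator vector of J (i.e., s'_i = 1 if i ∈ J, else 0). -/
open Matrix

/-- Optimal solutions of the relaxed structured pruning problem can be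
binarized on any `λ`-subset of the support. -/
theorem stmt1 {m n p : ℕ} (X : Matrix (Fin n) (Fin p) ℝ) (Y : Matrix (Fin m) (Fin p) ℝ)
    (lam : ℕ) (hlam : 1 ≤ lam) (hlamn : lam ≤ n)
    (f : Matrix (Fin m) (Fin n) ℝ → ℝ)
    (hf : f = fun W => (1 / 2) * ∑ j, ∑ k, ((W * X - Y) j k) ^ 2)
    (Feas : Matrix (Fin m) (Fin n) ℝ → (Fin n → ℝ) → Prop)
    (hFeas : Feas = fun W s =>
      W * Matrix.diagonal s = (0 : Matrix (Fin m) (Fin n) ℝ) ∧ (∀ i, 0 ≤ s i ∧ s i ≤ 1) ∧ ∑ i, s i = (lam : ℝ))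
    (What : Matrix (Fin m) (Fin n) ℝ) (shat : Fin n → ℝ)
    (hopt : Feas What shat ∧ ∀ W s, Feas W s → f What ≤ f W)
    (J : Finset (Fin n)) (hJcard : J.card = lam) (hJsupp : ∀ i ∈ J, shat i ≠ 0) :
    Feas What (fun i => if i ∈ J then 1 else 0) ∧
      ∀ W s, Feas W s → f What ≤ f W := by
  obtain ⟨hfeas, hmin⟩ := hopt
  rw [hFeas] at hfeas ⊢
  obtain ⟨hW, hbd, hsum⟩ := hfeas
  refine ⟨⟨?_, ?_, ?_⟩, ?_⟩
  · ext j k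
    simp only [mul_diagonal, Matrix.zero_apply]
    by_cases hk : k ∈ J
    · have h0 : What j k * shat k = 0 := by
        have := congrFun (congrFun hW j) k
        simpa [mul_diagonal] using this
      have : What j k = 0 := by
        rcases mul_eq_zero.mp h0 with h | h
        · exact h
        · exact absurd h (hJsupp k hk)
      simp [this]
    · simp [hk]
  · intro i; by_cases hi : i ∈ J <;> simp [hi]
  · simp [Finset.sum_ite_mem, hJcard]
  · intro W s hWs
    exact hmin W s (by rw [hFeas]; exact hWs)
end

section
/- The optimal value of the mixed-integer structured pruning problem (with binary constraint s ∈ {0,1}^n) equals the optimal value of its continuous relaxation (with s ∈ [0,1]^n), under the common constraints W·diag(s) = 0 and 1ᵀs = λ, with objective (1/2)‖WX − Y‖_F², provided both problems attain their minima. -/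
open Matrix

/-- The mixed-integer structured pruning problem and its continuous relaxation
have the same optimal value, provided both attain their minima. -/
theorem stmt2 {m n p : ℕ} (X : Matrix (Fin n) (Fin p) ℝ) (Y : Matrix (Fin m) (Fin p) ℝ)
    (lam : ℕ) (hlam : 1 ≤ lam) (hlamn : lam ≤ n)
    (f : Matrix (Fin m) (Fin n) ℝ → ℝ)
    (hf : f = fun W => (1 / 2) * ∑ j, ∑ k, ((W * X - Y) j k) ^ 2)
    (FeasInt FeasRel : Matrix (Fin m) (Fin n) ℝ → (Fin n → ℝ) → Prop)
    (hFeasInt : FeasInt = fun W s =>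
      W * Matrix.diagonal s = (0 : Matrix (Fin m) (Fin n) ℝ) ∧
        (∀ i, s i = 0 ∨ s i = 1) ∧ ∑ i, s i = (lam : ℝ))
    (hFeasRel : FeasRel = fun W s =>
      W * Matrix.diagonal s = (0 : Matrix (Fin m) (Fin n) ℝ) ∧
        (∀ i, 0 ≤ s i ∧ s i ≤ 1) ∧ ∑ i, s i = (lam : ℝ))
    (W₀ : Matrix (Fin m) (Fin n) ℝ) (s₀ : Fin n → ℝ)
    (h₀ : FeasInt W₀ s₀ ∧ ∀ W s, FeasInt W s → f W₀ ≤ f W)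
    (W₁ : Matrix (Fin m) (Fin n) ℝ) (s₁ : Fin n → ℝ)
    (h₁ : FeasRel W₁ s₁ ∧ ∀ W s, FeasRel W s → f W₁ ≤ f W) :
    f W₀ = f W₁ := by
  subst hFeasInt hFeasRel
  obtain ⟨⟨hW0, hs0b, hs0sum⟩, hmin0⟩ := h₀
  obtain ⟨⟨hW1, hs1b, hs1sum⟩, hmin1⟩ := h₁
  apply le_antisymm
  · -- build a binary feasible point with matrix W₁
    set T : Finset (Fin n) := Finset.univ.filter (fun i => s₁ i ≠ 0) with hT
    have hcard : lam ≤ T.card := by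
      have : (lam : ℝ) ≤ (T.card : ℝ) := by
        rw [← hs1sum]
        calc ∑ i, s₁ i = ∑ i ∈ T, s₁ i := by
              rw [Finset.sum_filter]
              apply Finset.sum_congr rfl
              intro i _
              by_cases h : s₁ i = 0 <;> simp [h]
          _ ≤ ∑ _i ∈ T, (1 : ℝ) := Finset.sum_le_sum (fun i _ => (hs1b i).2)
          _ = (T.card : ℝ) := by simp
      exact_mod_cast this
    obtain ⟨S, hST, hScard⟩ := Finset.exists_subset_card_eq hcard
    set s' : Fin n → ℝ := fun i => if i ∈ S then 1 else 0 with hs'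
    have hWcol : ∀ j k, s₁ k ≠ 0 → W₁ j k = 0 := by
      intro j k hk
      have := congrFun (congrFun hW1 j) k
      simp [Matrix.mul_apply, Matrix.diagonal_apply, Finset.sum_ite_eq] at this
      rcases this with h | h
      · exact h
      · exact absurd h hk
    have hfeas : W₁ * Matrix.diagonal s' = 0 ∧ (∀ i, s' i = 0 ∨ s' i = 1) ∧
        ∑ i, s' i = (lam : ℝ) := by
      refine ⟨?_, ?_, ?_⟩
      · ext j k
        simp only [Matrix.mul_apply, Matrix.diagonal_apply, Matrix.zero_apply,
          mul_ite, mul_zero]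
        rw [Finset.sum_ite_eq' Finset.univ k]
        simp only [Finset.mem_univ, if_true]
        by_cases hk : k ∈ S
        · have : s₁ k ≠ 0 := (Finset.mem_filter.mp (hST hk)).2
          simp [hWcol j k this]
        · simp [hs', hk]
      · intro i
        by_cases h : i ∈ S <;> simp [hs', h]
      · simp [hs', Finset.sum_ite_mem, hScard]
    exact hmin0 W₁ s' hfeas
  · refine hmin1 W₀ s₀ ⟨hW0, fun i => ?_, hs0sum⟩
    rcases hs0b i with h | h <;> simp [h]
end
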